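/- Let p : E ⥤ B be an isofibration of categories. Then p is a Grothendieck fibration if and only if for every object x of E, the induced functor p_x : E/x ⥤ B/p(x) between slice categories admits a fully faithful right adjoint. -/

import Mathlib

open CategoryTheory CategoryTheory.Limits

def StronglyCartesian {E B : Type*} [Category E] [Category B] (p : E ⥤ B)
    {x' x : E} (f : x' ⟶ x) : Prop :=
  ∀ {z : E} (g : z ⟶ x) (h : p.obj z ⟶ p.obj x'),
    p.map g = h ≫ p.map f → ∃! k : z ⟶ x', p.map k = h ∧ k ≫ f = g

def GrothFibration {E B : Type*} [Category E] [Category B] (p : E ⥤ B) : Prop :=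
  ∀ (x : E) {b : B} (h : b ⟶ p.obj x), ∃ (x' : E) (f : x' ⟶ x) (e : p.obj x' = b),
    StronglyCartesian p f ∧ p.map f = eqToHom e ≫ h

/-- `p` is an isofibration: every isomorphism `b ≅ p x` lifts to an isomorphism
with codomain `x`. -/
def Isofibration {E B : Type*} [Category E] [Category B] (p : E ⥤ B) : Prop :=
  ∀ (x : E) {b : B} (e : b ≅ p.obj x), ∃ (y : E) (i : y ≅ x) (h : p.obj y = b),
    p.map i.hom = eqToHom h ≫ e.hom

section Aux

@[simp] lemma Over_post_obj_left_aux {E B : Type*} [Category E] [Category B] (p : E ⥤ B) {x : E}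
    (X : Over x) : ((Over.post p).obj X).left = p.obj X.left := rfl

@[simp] lemma Over_post_obj_hom_aux {E B : Type*} [Category E] [Category B] (p : E ⥤ B) {x : E}
    (X : Over x) : ((Over.post p).obj X).hom = p.map X.hom := rfl

@[simp] lemma Over_post_map_left_aux {E B : Type*} [Category E] [Category B] (p : E ⥤ B) {x : E}
    {X Y : Over x} (f : X ⟶ Y) : ((Over.post p).map f).left = p.map f.left := rfl


variable {E B : Type*} [Category E] [Category B] (p : E ⥤ B)

/-- Forward direction: a Grothendieck fibration induces localizations on slices. -/
theorem forward_aux (hp : GrothFibration p) (x : E) :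
    ∃ q : Over (p.obj x) ⥤ Over x,
      q.Full ∧ q.Faithful ∧ Nonempty (Over.post p ⊣ q) := by
  classical
  choose x' f e cart comm using fun (Y : Over (p.obj x)) => hp x Y.hom
  have key : ∀ (X : Over x) (Y : Over (p.obj x)) (u : (Over.post p).obj X ⟶ Y),
      ∃! k : X.left ⟶ x' Y, p.map k = u.left ≫ eqToHom (e Y).symm ∧ k ≫ f Y = X.hom := by
    intro X Y u
    apply cart Y X.hom
    have hw : u.left ≫ Y.hom = p.map X.hom := Over.w u
    rw [comm Y, ← hw]
    simp [Over.post]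
  let fwd : ∀ (X : Over x) (Y : Over (p.obj x)), ((Over.post p).obj X ⟶ Y) → (X ⟶ Over.mk (f Y)) :=
    fun X Y u => Over.homMk (key X Y u).choose
      (by simpa using (key X Y u).choose_spec.1.2)
  have hfwd : ∀ (X : Over x) (Y : Over (p.obj x)) (u : (Over.post p).obj X ⟶ Y),
      p.map (fwd X Y u).left = u.left ≫ eqToHom (e Y).symm :=
    fun X Y u => (key X Y u).choose_spec.1.1
  have huniq : ∀ (X : Over x) (Y : Over (p.obj x)) (u : (Over.post p).obj X ⟶ Y)
      (k : X ⟶ Over.mk (f Y)), p.map k.left = u.left ≫ eqToHom (e Y).symm → k = fwd X Y u := by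
    intro X Y u k hk
    ext
    exact (key X Y u).choose_spec.2 k.left ⟨hk, by simpa using Over.w k⟩
  let inv : ∀ (X : Over x) (Y : Over (p.obj x)), (X ⟶ Over.mk (f Y)) → ((Over.post p).obj X ⟶ Y) :=
    fun X Y k => Over.homMk (p.map k.left ≫ eqToHom (e Y))
      (by
        have hw : k.left ≫ f Y = X.hom := by simpa using Over.w k
        simp [Over.post, ← comm Y, ← p.map_comp, hw])
  have hinv : ∀ (X : Over x) (Y : Over (p.obj x)) (k : X ⟶ Over.mk (f Y)),
      (inv X Y k).left = p.map k.left ≫ eqToHom (e Y) := fun X Y k => rfl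
  let eqv : ∀ (X : Over x) (Y : Over (p.obj x)),
      ((Over.post p).obj X ⟶ Y) ≃ (X ⟶ Over.mk (f Y)) := fun X Y =>
    { toFun := fwd X Y
      invFun := inv X Y
      left_inv := fun u => by
        ext
        rw [hinv, hfwd]
        simp [Over.post]
      right_inv := fun k => by
        refine (huniq X Y (inv X Y k) k ?_).symm
        rw [hinv]
        simp }
  have he : ∀ (X' X : Over x) (Y : Over (p.obj x)) (m : X' ⟶ X)
      (u : (Over.post p).obj X ⟶ Y),
      eqv X' Y ((Over.post p).map m ≫ u) = m ≫ eqv X Y u := by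
    intro X' X Y m u
    refine (huniq X' Y _ (m ≫ eqv X Y u) ?_).symm
    have : (m ≫ eqv X Y u).left = m.left ≫ (fwd X Y u).left := rfl
    rw [this, p.map_comp, hfwd]
    exact (Category.assoc _ _ _).symm
  let adj := Adjunction.adjunctionOfEquivRight eqv he
  have hciso : IsIso adj.counit := by
    have : ∀ Y, IsIso (adj.counit.app Y) := by
      intro Y
      have hc : adj.counit.app Y = inv (Over.mk (f Y)) Y (𝟙 _) := by
        simp [adj, Adjunction.adjunctionOfEquivRight, Adjunction.mkOfHomEquiv, eqv]
      have hc' : (adj.counit.app Y).left = eqToHom (e Y) := by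
        rw [hc, hinv]
        simp [Over.post]
      have : IsIso ((Over.forget (p.obj x)).map (adj.counit.app Y)) := by
        simp only [Over.forget_map, hc']
        exact Iso.isIso_hom (eqToIso (e Y))
      exact isIso_of_reflects_iso (adj.counit.app Y) (Over.forget (p.obj x))
    apply NatIso.isIso_of_isIso_app
  have ff := adj.fullyFaithfulROfIsIsoCounit
  exact ⟨_, ff.full, ff.faithful, ⟨adj⟩⟩

end Aux

/-- An isofibration is a Grothendieck fibration iff each induced functor on slices
`E/x ⥤ B/p(x)` admits a fully faithful right adjoint (i.e. is a localization). -/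
theorem fibration_iff_slices_are_localizations {E B : Type*} [Category E] [Category B]
    (p : E ⥤ B) (hiso : Isofibration p) :
    GrothFibration p ↔
      ∀ x : E, ∃ q : Over (p.obj x) ⥤ Over x,
        q.Full ∧ q.Faithful ∧ Nonempty (Over.post p ⊣ q) := by
  constructor
  · intro hp x
    exact forward_aux p hp x
  · intro hq x b h
    obtain ⟨q, hfull, hfaith, ⟨adj⟩⟩ := hq x
    haveI := hfull; haveI := hfaith
    set Y : Over (p.obj x) := Over.mk h with hY
    set x'' : E := (q.obj Y).left with hx''
    set f'' : x'' ⟶ x := (q.obj Y).hom with hf''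
    have hε : IsIso (adj.counit.app Y) := inferInstance
    set u : p.obj x'' ⟶ b := (adj.counit.app Y).left with hu
    have hu_iso : IsIso u := by
      have : IsIso ((Over.forget (p.obj x)).map (adj.counit.app Y)) := inferInstance
      simpa using this
    have hwu : u ≫ h = p.map f'' := by simpa [Y] using Over.w (adj.counit.app Y)
    -- Cartesian-type property of f'' via the adjunction
    have key : ∀ {z : E} (g : z ⟶ x) (v : p.obj z ⟶ b), v ≫ h = p.map g →
        ∃! k : z ⟶ x'', p.map k ≫ u = v ∧ k ≫ f'' = g := by
      intro z g v hv
      set Z : Over x := Over.mk g with hZ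
      have hm : ∀ (m : Z ⟶ q.obj Y),
          ((adj.homEquiv Z Y).symm m).left = p.map m.left ≫ u := by
        intro m
        rw [adj.homEquiv_counit]
        simp [Y]
        rfl
      set w : (Over.post p).obj Z ⟶ Y := Over.homMk v (by simpa [Y, Z] using hv) with hw
      refine ⟨(adj.homEquiv Z Y w).left, ⟨?_, ?_⟩, ?_⟩
      · have := hm (adj.homEquiv Z Y w)
        rw [Equiv.symm_apply_apply] at this
        simp [w] at this
        exact this.symm
      · simpa only [Over.mk_hom, Z, f''] using Over.w (adj.homEquiv Z Y w)
      · intro k' ⟨hk1, hk2⟩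
        set m' : Z ⟶ q.obj Y := Over.homMk k' (by simpa [Z] using hk2) with hm'
        have : (adj.homEquiv Z Y).symm m' = w := by
          ext
          rw [hm m']
          simp [m', w, hk1]
          rfl
        have h2 : m' = adj.homEquiv Z Y w := by
          rw [← this, Equiv.apply_symm_apply]
        calc k' = m'.left := by simp [m']
          _ = (adj.homEquiv Z Y w).left := by rw [h2]
    -- lift the iso `u` using the isofibration property
    have hu_iso' : IsIso u := hu_iso
    obtain ⟨y, i, hy, hi⟩ := hiso x'' (asIso u).symm
    have hpinv : p.map i.hom = eqToHom hy ≫ inv u := by simpa using hi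
    have hpi : IsIso (p.map i.hom) := inferInstance
    have hpf : p.map (i.hom ≫ f'') = eqToHom hy ≫ h := by
      rw [p.map_comp, hpinv, ← hwu]
      simp
    refine ⟨y, i.hom ≫ f'', hy, ?_, hpf⟩
    intro z g hmap hcomp
    have hv : (hmap ≫ eqToHom hy) ≫ h = p.map g := by
      rw [hcomp, hpf]; simp
    obtain ⟨k, ⟨hk1, hk2⟩, hkuniq⟩ := key g (hmap ≫ eqToHom hy) hv
    refine ⟨k ≫ i.inv, ⟨?_, ?_⟩, ?_⟩
    · have : p.map (k ≫ i.inv) ≫ p.map i.hom = hmap ≫ p.map i.hom := by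
        rw [← p.map_comp, Category.assoc, Iso.inv_hom_id, Category.comp_id, hpinv,
          ← Category.assoc, ← hk1]
        simp
      exact (cancel_mono (p.map i.hom)).mp this
    · rw [Category.assoc, Iso.inv_hom_id_assoc, hk2]
    · intro k₁ ⟨hk₁1, hk₁2⟩
      have h1 : k₁ ≫ i.hom = k := by
        apply hkuniq
        constructor
        · rw [p.map_comp, hk₁1, hpinv]
          simp
        · rw [Category.assoc]; exact hk₁2
      rw [← h1]; simp
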